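/- Let p be a prime with p > 2, and let a ∈ ℤ with |a| ≤ ⌊2√p⌋ (i.e. a² ≤ 4p). If both p+1−a and p+1+a are (up to sign) powers of p, then this is impossible; that is, (p+1−a)(p+1+a) is divisible by some prime ℓ ≠ p. -/

import Mathlib

theorem stmt_6 (p : ℕ) (hp : p.Prime) (hp2 : 2 < p) (a : ℤ) (ha : a ^ 2 ≤ 4 * p) :
    ∃ ℓ : ℕ, ℓ.Prime ∧ ℓ ≠ p ∧ (ℓ : ℤ) ∣ ((p : ℤ) + 1 - a) * ((p : ℤ) + 1 + a) := by
  by_contra hcon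
  push_neg at hcon
  set x : ℤ := (p : ℤ) + 1 - a with hxdef
  set y : ℤ := (p : ℤ) + 1 + a with hydef
  have hp3 : (3 : ℤ) ≤ (p : ℤ) := by exact_mod_cast hp2
  have hx : 0 < x := by nlinarith [sq_nonneg (a - (p : ℤ) - 1), sq_nonneg (a + (p : ℤ) + 1)]
  have hy : 0 < y := by nlinarith [sq_nonneg (a - (p : ℤ) - 1), sq_nonneg (a + (p : ℤ) + 1)]
  have hxlt : x < (p : ℤ) ^ 2 := by nlinarith [sq_nonneg (a + (p : ℤ) + 1), sq_nonneg (a - (p : ℤ) - 1)]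
  have hylt : y < (p : ℤ) ^ 2 := by nlinarith [sq_nonneg (a + (p : ℤ) + 1), sq_nonneg (a - (p : ℤ) - 1)]
  set n : ℕ := (x * y).natAbs with hndef
  have hn : (n : ℤ) = x * y := Int.natAbs_of_nonneg (by positivity)
  have hall : ∀ q : ℕ, q.Prime → q ∣ n → q = p := by
    intro q hq hqn
    by_contra hqp
    exact hcon q hq hqp (hn ▸ Int.natCast_dvd_natCast.mpr hqn)
  have hngt : (p : ℤ) < (n : ℤ) := by rw [hn]; nlinarith
  have hn1 : 1 < n := by
    have : (1 : ℤ) < n := lt_trans (by linarith) hngt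
    exact_mod_cast this
  -- p divides n
  obtain ⟨q, hq, hqn⟩ := Nat.exists_prime_and_dvd (by omega : n ≠ 1)
  have hpn : p ∣ n := hall q hq hqn ▸ hqn
  obtain ⟨m, hm⟩ := hpn
  have hpn' : p < n := by exact_mod_cast hngt
  have hm1 : 1 < m := by nlinarith [hpn', hm, hp2]
  obtain ⟨r, hr, hrm⟩ := Nat.exists_prime_and_dvd (by omega : m ≠ 1)
  have hpm : p ∣ m := hall r hr (hm ▸ Dvd.dvd.mul_left hrm p) ▸ hrm
  have hp2n : (p : ℤ) ^ 2 ∣ (n : ℤ) := by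
    obtain ⟨s, hs⟩ := hpm
    exact ⟨s, by rw [hm, hs]; push_cast; ring⟩
  rw [hn] at hp2n
  have hpZ : Prime (p : ℤ) := Nat.prime_iff_prime_int.mp hp
  have hnotboth : ¬ ((p : ℤ) ∣ x ∧ (p : ℤ) ∣ y) := by
    rintro ⟨h1, h2⟩
    have : (p : ℤ) ∣ 2 * ((p : ℤ) + 1) := by
      have := dvd_add h1 h2
      simpa [hxdef, hydef] using (by rw [hxdef, hydef] at this; rw [show (2:ℤ) * ((p:ℤ) + 1) = (p:ℤ) + 1 - a + ((p:ℤ) + 1 + a) by ring]; exact this : (p : ℤ) ∣ 2 * ((p : ℤ) + 1))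
    rcases hpZ.dvd_mul.mp this with h | h
    · have : (p : ℤ) ≤ 2 := Int.le_of_dvd (by norm_num) h
      linarith
    · have hpp : (p : ℤ) ∣ 1 := (dvd_add_right dvd_rfl).mp h
      have := Int.le_of_dvd one_pos hpp
      linarith
  have hpxy : (p : ℤ) ∣ x * y := dvd_trans (dvd_pow_self _ two_ne_zero) hp2n
  rcases hpZ.dvd_mul.mp hpxy with hdx | hdy
  · have hnoty : ¬ (p : ℤ) ∣ y := fun h => hnotboth ⟨hdx, h⟩
    have hcop : IsCoprime ((p : ℤ) ^ 2) y := (((hpZ.coprime_iff_not_dvd).mpr hnoty)).pow_left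
    have : (p : ℤ) ^ 2 ∣ x := hcop.dvd_of_dvd_mul_right hp2n
    have := Int.le_of_dvd hx this
    linarith
  · have hnotx : ¬ (p : ℤ) ∣ x := fun h => hnotboth ⟨h, hdy⟩
    have hcop : IsCoprime ((p : ℤ) ^ 2) x := (((hpZ.coprime_iff_not_dvd).mpr hnotx)).pow_left
    have : (p : ℤ) ^ 2 ∣ y := hcop.dvd_of_dvd_mul_left hp2n
    have := Int.le_of_dvd hy this
    linarith
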